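/- Let B be a nondegenerate alternating bilinear form on a finite-dimensional complex vector space V and let P be self-adjoint with respect to B and nilpotent of index n (P^n = 0, P^{n−1} ≠ 0). Let L be a P-invariant Lagrangian subspace with L ⊄ ker P^{n−1}. Then there exist P-invariant subspaces V₁, V₂ ⊆ V such that: V = V₁ ⊕ V₂; B(v₁, v₂) = 0 for all v₁ ∈ V₁, v₂ ∈ V₂; dim V₁ = 2n and dim(V₁ ∩ ker P) = 2 (so V₁ is a single Jordan block J_{0,2n}); L = (L ∩ V₁) ⊕ (L ∩ V₂); and L ∩ V₁ ⊄ ker P^{n−1}. -/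
import Mathlib


open Module

private lemma aux_tri (m t : ℕ) (c : ℕ → ℂ)
    (hc1 : c (m - 1) = 1) (hc0 : ∀ k, m ≤ k → c k = 0)
    (b : Fin m → ℂ)
    (hb : ∀ j : Fin m, ∑ i, b i * c (i.val + j.val + t) = 0) :
    ∀ i : Fin m, i.val + t < m → b i = 0 := by
  suffices h : ∀ N, ∀ i : Fin m, i.val = N → i.val + t < m → b i = 0 by
    exact fun i hi => h i.val i rfl hi
  intro N
  induction N using Nat.strong_induction_on with
  | _ N ih =>
    intro i hiN hit
    have hj : m - 1 - t - i.val < m := by omega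
    have h0 := hb ⟨m - 1 - t - i.val, hj⟩
    simp only [Fin.val_mk] at h0
    rw [Finset.sum_eq_single i] at h0
    · have hix : i.val + (m - 1 - t - i.val) + t = m - 1 := by omega
      rw [hix, hc1, mul_one] at h0
      exact h0
    · intro k _ hk
      have hkv : k.val ≠ i.val := fun h => hk (Fin.ext h)
      rcases lt_or_gt_of_ne hkv with h | h
      · rw [ih k.val (by omega) k rfl (by omega), zero_mul]
      · rw [hc0 _ (by omega), mul_zero]
    · intro hi; exact absurd (Finset.mem_univ i) hi

/-- **Extraction of one maximal Jordan block.**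
Let `B` be a nondegenerate alternating form on a finite-dimensional complex vector
space `V` and `P` self-adjoint with respect to `B` and nilpotent of index `n`.  If
`L` is a `P`-invariant Lagrangian subspace with `L ⊄ ker P^{n-1}`, then `V` splits
into a `B`-orthogonal direct sum of `P`-invariant subspaces `V₁ ⊕ V₂` with `V₁` a
single Jordan block `J_{0,2n}` (i.e. `dim V₁ = 2n` and `dim (V₁ ⊓ ker P) = 2`),
`L = (L ⊓ V₁) ⊕ (L ⊓ V₂)`, and `L ⊓ V₁ ⊄ ker P^{n-1}`. -/
theorem extract_one_jordan_block
    {V : Type*} [AddCommGroup V] [Module ℂ V] [FiniteDimensional ℂ V]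
    (B : V →ₗ[ℂ] V →ₗ[ℂ] ℂ)
    (hBalt : ∀ v, B v v = 0)
    (hBnd : ∀ v, (∀ u, B v u = 0) → v = 0)
    (P : V →ₗ[ℂ] V)
    (hPsa : ∀ u v, B (P u) v = B u (P v))
    (n : ℕ)
    (hPn : P ^ n = 0)
    (hPn1 : P ^ (n - 1) ≠ 0)
    (L : Submodule ℂ V)
    (hLiso : ∀ u ∈ L, ∀ v ∈ L, B u v = 0)
    (hLdim : 2 * finrank ℂ L = finrank ℂ V)
    (hLinv : ∀ u ∈ L, P u ∈ L)
    (hLht : ¬ L ≤ LinearMap.ker (P ^ (n - 1))) :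
    ∃ V₁ V₂ : Submodule ℂ V,
      (∀ v ∈ V₁, P v ∈ V₁) ∧
      (∀ v ∈ V₂, P v ∈ V₂) ∧
      IsCompl V₁ V₂ ∧
      (∀ v₁ ∈ V₁, ∀ v₂ ∈ V₂, B v₁ v₂ = 0) ∧
      finrank ℂ V₁ = 2 * n ∧
      finrank ℂ ↥(V₁ ⊓ LinearMap.ker P) = 2 ∧
      L = (L ⊓ V₁) ⊔ (L ⊓ V₂) ∧
      ¬ (L ⊓ V₁ ≤ LinearMap.ker (P ^ (n - 1))) := by
  have hn : 1 ≤ n := by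
    rcases Nat.eq_zero_or_pos n with h | h
    · subst h; exact absurd hPn hPn1
    · exact h
  -- skew-symmetry
  have hskew : ∀ u v : V, B u v = -B v u := by
    intro u v
    have h := hBalt (u + v)
    simp only [map_add, LinearMap.add_apply, hBalt u, hBalt v] at h
    linear_combination h
  -- moving powers of `P` across `B`
  have hmove : ∀ (k : ℕ) (u v : V), B ((P ^ k) u) v = B u ((P ^ k) v) := by
    intro k
    induction k with
    | zero => intro u v; simp
    | succ k ih =>
      intro u v
      have h1 : (P ^ (k + 1)) u = (P ^ k) (P u) := by rw [pow_succ]; rfl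
      have h2 : (P ^ (k + 1)) v = P ((P ^ k) v) := by rw [pow_succ']; rfl
      rw [h1, ih, hPsa, h2]
  have hL : ∀ (k : ℕ) (u : V), u ∈ L → (P ^ k) u ∈ L := by
    intro k
    induction k with
    | zero => intro u hu; simpa using hu
    | succ k ih =>
      intro u hu
      rw [pow_succ', Module.End.mul_apply]
      exact hLinv _ (ih u hu)
  have hP0 : ∀ k, n ≤ k → (P ^ k) = (0 : V →ₗ[ℂ] V) := by
    intro k hk
    rw [← Nat.sub_add_cancel hk, pow_add, hPn, mul_zero]
  -- choose `e`
  obtain ⟨e, heL, heK⟩ : ∃ e ∈ L, e ∉ LinearMap.ker (P ^ (n - 1)) := by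
    by_contra h; push_neg at h; exact hLht fun x hx => h x hx
  have he : (P ^ (n - 1)) e ≠ 0 := fun h => heK (LinearMap.mem_ker.mpr h)
  -- choose `f` with `B (P^{n-1} e) f = 1`
  obtain ⟨f₀, hf₀⟩ : ∃ w, B ((P ^ (n - 1)) e) w ≠ 0 := by
    by_contra h; push_neg at h; exact he (hBnd _ h)
  obtain ⟨f, hf1⟩ : ∃ f, B ((P ^ (n - 1)) e) f = 1 :=
    ⟨(B ((P ^ (n - 1)) e) f₀)⁻¹ • f₀, by
      rw [map_smul, smul_eq_mul]; exact inv_mul_cancel₀ hf₀⟩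
  have hc1 : B e ((P ^ (n - 1)) f) = 1 := by rw [← hmove]; exact hf1
  have hc0 : ∀ k, n ≤ k → B e ((P ^ k) f) = 0 := fun k hk => by rw [hP0 k hk]; simp
  -- pairing relations
  have hee : ∀ i j : ℕ, B ((P ^ i) e) ((P ^ j) e) = 0 := fun i j => by
    rw [hmove]; exact hLiso e heL _ (hL i _ (hL j e heL))
  have hef : ∀ i j : ℕ, B ((P ^ i) e) ((P ^ j) f) = B e ((P ^ (i + j)) f) := fun i j => by
    rw [hmove, ← Module.End.mul_apply, ← pow_add]
  have hfe : ∀ i j : ℕ, B ((P ^ i) f) ((P ^ j) e) = -B e ((P ^ (j + i)) f) := fun i j => by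
    rw [hskew, hef]
  have hff : ∀ i j : ℕ, n ≤ i + j → B ((P ^ i) f) ((P ^ j) f) = 0 := fun i j hij => by
    rw [hmove, ← Module.End.mul_apply, ← pow_add, hP0 _ hij]; simp
  -- the generating family of `V₁`
  set g : Fin n ⊕ Fin n → V :=
    Sum.elim (fun i => (P ^ (i : ℕ)) e) (fun i => (P ^ (i : ℕ)) f) with hg
  have hgl : ∀ i : Fin n, g (Sum.inl i) = (P ^ (i : ℕ)) e := fun i => rfl
  have hgr : ∀ i : Fin n, g (Sum.inr i) = (P ^ (i : ℕ)) f := fun i => rfl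
  have hexp : ∀ (w : V) (coef : Fin n ⊕ Fin n → ℂ),
      B w (∑ i, coef i • g i)
        = (∑ i : Fin n, coef (Sum.inl i) * B w ((P ^ (i : ℕ)) e))
          + ∑ i : Fin n, coef (Sum.inr i) * B w ((P ^ (i : ℕ)) f) := by
    intro w coef
    rw [map_sum, Fintype.sum_sum_type]
    simp [hgl, hgr]
  -- extraction of coefficients from pairings
  have hstep1 : ∀ (t : ℕ) (coef : Fin n ⊕ Fin n → ℂ),
      (∀ j : Fin n, B ((P ^ ((j : ℕ) + t)) e) (∑ i, coef i • g i) = 0) →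
      ∀ i : Fin n, (i : ℕ) + t < n → coef (Sum.inr i) = 0 := by
    intro t coef h
    apply aux_tri n t (fun k => B e ((P ^ k) f)) hc1 hc0
    intro j
    have h0 := h j
    rw [hexp] at h0
    have e1 : ∑ i : Fin n, coef (Sum.inl i) * B ((P ^ ((j : ℕ) + t)) e) ((P ^ (i : ℕ)) e)
        = 0 := Finset.sum_eq_zero fun i _ => by rw [hee, mul_zero]
    rw [e1, zero_add] at h0
    refine Eq.trans (Finset.sum_congr rfl fun i _ => ?_) h0
    rw [hef, show (j : ℕ) + t + (i : ℕ) = (i : ℕ) + (j : ℕ) + t from by omega]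
  have hstep2 : ∀ (t : ℕ) (coef : Fin n ⊕ Fin n → ℂ),
      (∀ j i : Fin n, coef (Sum.inr i) * B ((P ^ ((j : ℕ) + t)) f) ((P ^ (i : ℕ)) f) = 0) →
      (∀ j : Fin n, B ((P ^ ((j : ℕ) + t)) f) (∑ i, coef i • g i) = 0) →
      ∀ i : Fin n, (i : ℕ) + t < n → coef (Sum.inl i) = 0 := by
    intro t coef hrr h
    apply aux_tri n t (fun k => B e ((P ^ k) f)) hc1 hc0
    intro j
    have h0 := h j
    rw [hexp] at h0
    have e2 : ∑ i : Fin n, coef (Sum.inr i) * B ((P ^ ((j : ℕ) + t)) f) ((P ^ (i : ℕ)) f)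
        = 0 := Finset.sum_eq_zero fun i _ => hrr j i
    rw [e2, add_zero] at h0
    have e3 : (∑ i : Fin n, coef (Sum.inl i) * B e ((P ^ ((i : ℕ) + (j : ℕ) + t)) f))
        = -∑ i : Fin n, coef (Sum.inl i) * B ((P ^ ((j : ℕ) + t)) f) ((P ^ (i : ℕ)) e) := by
      rw [← Finset.sum_neg_distrib]
      refine Finset.sum_congr rfl fun i _ => ?_
      rw [hfe, mul_neg, neg_neg,
        show (i : ℕ) + ((j : ℕ) + t) = (i : ℕ) + (j : ℕ) + t from by omega]
    rw [e3, h0, neg_zero]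
  -- linear independence
  have hli : LinearIndependent ℂ g := by
    rw [Fintype.linearIndependent_iff]
    intro coef hsum
    have hr : ∀ i : Fin n, coef (Sum.inr i) = 0 := fun i =>
      hstep1 0 coef (fun j => by rw [hsum, map_zero]) i (by simpa using i.isLt)
    have hl : ∀ i : Fin n, coef (Sum.inl i) = 0 := fun i =>
      hstep2 0 coef (fun j i' => by rw [hr i', zero_mul])
        (fun j => by rw [hsum, map_zero]) i (by simpa using i.isLt)
    rintro (i | i)
    exacts [hl i, hr i]
  set V₁ : Submodule ℂ V := Submodule.span ℂ (Set.range g) with hV₁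
  have hmemV₁ : ∀ v : V, v ∈ V₁ ↔ ∃ coef : Fin n ⊕ Fin n → ℂ, ∑ i, coef i • g i = v :=
    fun v => Submodule.mem_span_range_iff_exists_fun ℂ
  have hPg : ∀ i, P (g i) ∈ V₁ := by
    rintro (i | i)
    · rw [hgl]
      have h1 : P ((P ^ (i : ℕ)) e) = (P ^ ((i : ℕ) + 1)) e := by
        rw [pow_succ', Module.End.mul_apply]
      by_cases hin : (i : ℕ) + 1 < n
      · rw [h1]
        exact Submodule.subset_span ⟨Sum.inl ⟨(i : ℕ) + 1, hin⟩, rfl⟩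
      · have h2 : (P ^ ((i : ℕ) + 1)) e = 0 := by
          rw [hP0 _ (by omega : n ≤ (i : ℕ) + 1)]; rfl
        rw [h1, h2]; exact Submodule.zero_mem _
    · rw [hgr]
      have h1 : P ((P ^ (i : ℕ)) f) = (P ^ ((i : ℕ) + 1)) f := by
        rw [pow_succ', Module.End.mul_apply]
      by_cases hin : (i : ℕ) + 1 < n
      · rw [h1]
        exact Submodule.subset_span ⟨Sum.inr ⟨(i : ℕ) + 1, hin⟩, rfl⟩
      · have h2 : (P ^ ((i : ℕ) + 1)) f = 0 := by
          rw [hP0 _ (by omega : n ≤ (i : ℕ) + 1)]; rfl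
        rw [h1, h2]; exact Submodule.zero_mem _
  have hV₁P : ∀ v ∈ V₁, P v ∈ V₁ := by
    intro v hv
    refine Submodule.span_induction (p := fun x _ => P x ∈ V₁) ?_ ?_ ?_ ?_ hv
    · rintro x ⟨i, rfl⟩; exact hPg i
    · show P 0 ∈ V₁; rw [map_zero]; exact Submodule.zero_mem _
    · intro x y _ _ hx hy; show P (x + y) ∈ V₁; rw [map_add]
      exact Submodule.add_mem _ hx hy
    · intro a x _ hx; show P (a • x) ∈ V₁; rw [map_smul]
      exact Submodule.smul_mem _ _ hx
  set V₂ : Submodule ℂ V := ⨅ i : Fin n ⊕ Fin n, LinearMap.ker (B (g i)) with hV₂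
  have hmemV₂ : ∀ v : V, v ∈ V₂ ↔ ∀ i, B (g i) v = 0 := by
    intro v; simp [hV₂, Submodule.mem_iInf, LinearMap.mem_ker]
  have horth : ∀ w ∈ V₁, ∀ v ∈ V₂, B w v = 0 := by
    intro w hw v hv
    refine Submodule.span_induction (p := fun x _ => B x v = 0) ?_ ?_ ?_ ?_ hw
    · rintro x ⟨i, rfl⟩; exact (hmemV₂ v).1 hv i
    · show B 0 v = 0; rw [map_zero]; rfl
    · intro x y _ _ hx hy; show B (x + y) v = 0
      rw [map_add, LinearMap.add_apply, hx, hy, add_zero]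
    · intro a x _ hx; show B (a • x) v = 0
      rw [map_smul, LinearMap.smul_apply, hx, smul_zero]
  have hV₂P : ∀ v ∈ V₂, P v ∈ V₂ := by
    intro v hv
    rw [hmemV₂]
    intro i
    rw [← hPsa]
    exact horth _ (hPg i) v hv
  -- disjointness
  have hdisj : V₁ ⊓ V₂ = ⊥ := by
    rw [eq_bot_iff]
    rintro v ⟨hv1, hv2⟩
    obtain ⟨coef, hcoef⟩ := (hmemV₁ v).1 hv1
    have hz := (hmemV₂ v).1 hv2
    have hr : ∀ i : Fin n, coef (Sum.inr i) = 0 := by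
      intro i
      refine hstep1 0 coef (fun j => ?_) i (by simpa using i.isLt)
      rw [hcoef]
      have h := hz (Sum.inl j)
      rw [hgl] at h
      simpa using h
    have hl : ∀ i : Fin n, coef (Sum.inl i) = 0 := by
      intro i
      refine hstep2 0 coef (fun j i' => by rw [hr i', zero_mul]) (fun j => ?_) i
        (by simpa using i.isLt)
      rw [hcoef]
      have h := hz (Sum.inr j)
      rw [hgr] at h
      simpa using h
    have hv0 : v = 0 := by
      rw [← hcoef]
      apply Finset.sum_eq_zero
      rintro (i | i) -
      · rw [hl i, zero_smul]
      · rw [hr i, zero_smul]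
    simp [hv0]
  have hdim1 : finrank ℂ V₁ = 2 * n := by
    rw [hV₁, finrank_span_eq_card hli]
    simp [two_mul]
  -- codisjointness
  have hsup : V₁ ⊔ V₂ = ⊤ := by
    set Φ : V →ₗ[ℂ] (Fin n ⊕ Fin n → ℂ) := LinearMap.pi (fun i => B (g i)) with hΦ
    have hker : LinearMap.ker Φ = V₂ := by
      ext v
      rw [LinearMap.mem_ker, hmemV₂]
      constructor
      · intro h i; exact congrFun h i
      · intro h; funext i; exact h i
    have h1 := LinearMap.finrank_range_add_finrank_ker Φ
    have h2 : finrank ℂ (LinearMap.range Φ) ≤ 2 * n := by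
      have h := Submodule.finrank_le (LinearMap.range Φ)
      rwa [Module.finrank_fintype_fun_eq_card, Fintype.card_sum, Fintype.card_fin,
        ← two_mul] at h
    have h3 := Submodule.finrank_sup_add_finrank_inf_eq V₁ V₂
    rw [hdisj, finrank_bot, add_zero] at h3
    have h4 : finrank ℂ ↥(V₁ ⊔ V₂) ≤ finrank ℂ V := Submodule.finrank_le _
    rw [hker] at h1
    exact Submodule.eq_top_of_finrank_eq (by omega)
  have hcompl : IsCompl V₁ V₂ := ⟨disjoint_iff.mpr hdisj, codisjoint_iff.mpr hsup⟩
  -- the kernel of `P` inside `V₁`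
  have hkerp : ∀ x : V, P ((P ^ (n - 1)) x) = (P ^ n) x := by
    intro x
    rw [← Module.End.mul_apply, ← pow_succ', Nat.sub_add_cancel hn]
  have heq : V₁ ⊓ LinearMap.ker P
      = Submodule.span ℂ (Set.range ![(P ^ (n - 1)) e, (P ^ (n - 1)) f]) := by
    apply le_antisymm
    · rintro v ⟨hv1, hvk'⟩
      have hvk : P v = 0 := hvk'
      obtain ⟨coef, hcoef⟩ := (hmemV₁ v).1 hv1
      have hze : ∀ j : Fin n, B ((P ^ ((j : ℕ) + 1)) e) v = 0 := by
        intro j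
        have h1 : (P ^ ((j : ℕ) + 1)) e = P ((P ^ (j : ℕ)) e) := by
          rw [pow_succ', Module.End.mul_apply]
        rw [h1, hPsa, hvk, map_zero]
      have hzf : ∀ j : Fin n, B ((P ^ ((j : ℕ) + 1)) f) v = 0 := by
        intro j
        have h1 : (P ^ ((j : ℕ) + 1)) f = P ((P ^ (j : ℕ)) f) := by
          rw [pow_succ', Module.End.mul_apply]
        rw [h1, hPsa, hvk, map_zero]
      have hr : ∀ i : Fin n, (i : ℕ) + 1 < n → coef (Sum.inr i) = 0 := fun i hi =>
        hstep1 1 coef (fun j => by rw [hcoef]; exact hze j) i hi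
      have hl : ∀ i : Fin n, (i : ℕ) + 1 < n → coef (Sum.inl i) = 0 := by
        intro i hi
        refine hstep2 1 coef (fun j i' => ?_) (fun j => by rw [hcoef]; exact hzf j) i hi
        by_cases hi' : (i' : ℕ) + 1 < n
        · rw [hr i' hi', zero_mul]
        · rw [hff ((j : ℕ) + 1) (i' : ℕ) (by have := i'.isLt; omega), mul_zero]
      rw [← hcoef]
      apply Submodule.sum_mem
      rintro (i | i) -
      · by_cases hi : (i : ℕ) + 1 < n
        · rw [hl i hi, zero_smul]; exact Submodule.zero_mem _
        · have hiv : (i : ℕ) = n - 1 := by have := i.isLt; omega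
          rw [hgl, hiv]
          exact Submodule.smul_mem _ _ (Submodule.subset_span ⟨0, rfl⟩)
      · by_cases hi : (i : ℕ) + 1 < n
        · rw [hr i hi, zero_smul]; exact Submodule.zero_mem _
        · have hiv : (i : ℕ) = n - 1 := by have := i.isLt; omega
          rw [hgr, hiv]
          exact Submodule.smul_mem _ _ (Submodule.subset_span ⟨1, rfl⟩)
    · have hm0 : (P ^ (n - 1)) e ∈ V₁ ⊓ LinearMap.ker P :=
        Submodule.mem_inf.mpr ⟨Submodule.subset_span ⟨Sum.inl ⟨n - 1, by omega⟩, rfl⟩,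
          LinearMap.mem_ker.mpr (by rw [hkerp, hPn]; rfl)⟩
      have hm1 : (P ^ (n - 1)) f ∈ V₁ ⊓ LinearMap.ker P :=
        Submodule.mem_inf.mpr ⟨Submodule.subset_span ⟨Sum.inr ⟨n - 1, by omega⟩, rfl⟩,
          LinearMap.mem_ker.mpr (by rw [hkerp, hPn]; rfl)⟩
      rw [Submodule.span_le]
      rintro x ⟨i, rfl⟩
      fin_cases i
      exacts [hm0, hm1]
  have hli2 : LinearIndependent ℂ ![(P ^ (n - 1)) e, (P ^ (n - 1)) f] := by
    rw [Fintype.linearIndependent_iff]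
    intro coef hsum
    rw [Fin.sum_univ_two] at hsum
    simp only [Matrix.cons_val_zero, Matrix.cons_val_one, Matrix.head_cons] at hsum
    have h1 : coef 1 = 0 := by
      have h := congrArg (B e) hsum
      rw [map_add, map_smul, map_smul, map_zero] at h
      have he0 : B e ((P ^ (n - 1)) e) = 0 := hLiso e heL _ (hL _ e heL)
      rw [he0, hc1, smul_zero, zero_add, smul_eq_mul, mul_one] at h
      exact h
    have h0 : coef 0 = 0 := by
      rw [h1, zero_smul, add_zero] at hsum
      rcases smul_eq_zero.mp hsum with h | h
      · exact h
      · exact absurd h he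
    intro i
    fin_cases i
    exacts [h0, h1]
  have hdim2 : finrank ℂ ↥(V₁ ⊓ LinearMap.ker P) = 2 := by
    rw [heq, finrank_span_eq_card hli2]
    simp
  -- splitting of `L`
  have hLsplit : L = (L ⊓ V₁) ⊔ (L ⊓ V₂) := by
    apply le_antisymm
    · intro l hl
      have hlt : l ∈ V₁ ⊔ V₂ := by rw [hsup]; exact Submodule.mem_top
      obtain ⟨v₁, hv₁, v₂, hv₂, hadd⟩ := Submodule.mem_sup.1 hlt
      obtain ⟨coef, hcoef⟩ := (hmemV₁ v₁).1 hv₁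
      have hv₁eq : v₁ = l - v₂ := by rw [← hadd]; abel
      have hz : ∀ j : Fin n, B ((P ^ (j : ℕ)) e) v₁ = 0 := by
        intro j
        have h1 : B ((P ^ (j : ℕ)) e) l = 0 := by
          rw [hmove]; exact hLiso e heL _ (hL _ l hl)
        have h2 : B ((P ^ (j : ℕ)) e) v₂ = 0 := by
          have h := (hmemV₂ v₂).1 hv₂ (Sum.inl j)
          rwa [hgl] at h
        rw [hv₁eq, map_sub, h1, h2, sub_zero]
      have hr : ∀ i : Fin n, coef (Sum.inr i) = 0 := by
        intro i
        refine hstep1 0 coef (fun j => ?_) i (by simpa using i.isLt)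
        rw [hcoef]
        simpa using hz j
      have hv₁L : v₁ ∈ L := by
        rw [← hcoef]
        apply Submodule.sum_mem
        rintro (i | i) -
        · exact Submodule.smul_mem _ _ (hL _ e heL)
        · rw [hr i, zero_smul]; exact Submodule.zero_mem _
      have hv₂L : v₂ ∈ L := by
        have : v₂ = l - v₁ := by rw [← hadd]; abel
        rw [this]
        exact Submodule.sub_mem _ hl hv₁L
      exact Submodule.mem_sup.2 ⟨v₁, ⟨hv₁L, hv₁⟩, v₂, ⟨hv₂L, hv₂⟩, hadd⟩
    · exact sup_le inf_le_left inf_le_left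
  -- the last condition
  have heV₁ : e ∈ V₁ := by
    have : g (Sum.inl ⟨0, by omega⟩) = e := by
      rw [hgl]; simp
    exact this ▸ Submodule.subset_span ⟨Sum.inl ⟨0, by omega⟩, rfl⟩
  have hfinal : ¬ (L ⊓ V₁ ≤ LinearMap.ker (P ^ (n - 1))) := by
    intro h
    exact he (LinearMap.mem_ker.mp (h ⟨heL, heV₁⟩))
  exact ⟨V₁, V₂, hV₁P, hV₂P, hcompl, horth, hdim1, hdim2, hLsplit, hfinal⟩
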